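/- Let M : ℕ → Type be a family of distributive lattices, and f : ∀ i, M i → M (i+1) a family of maps each of which preserves binary joins and is order-reflecting with down-closed image (a 'lattice series'). Let L n be the concrete lax sum of M 0 → ... → M n (pairs (j, x) with (j, x) ≤ (l, y) iff j ≤ l and F_{j,l}(x) ≤ y, F_{j,l} the composite of the f's). Then there exists a distributive lattice structure on L n (a DistribLattice instance) whose underlying order is the lax-sum order; i.e., L n, with joins (x, j) ⊔ (y, l) = (F_{j,l}(x) ⊔ y, l) and meets (x, j) ⊓ (y, l) = (z', j) where F_{j,l}(z') = F_{j,l}(x) ⊓ y (for j ≤ l), is a distributive lattice. -/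

import Mathlib

/-- The composite `F_{j,l} = f_{l-1} ∘ ⋯ ∘ f_j : M j → M l` (identity when `j = l`). -/
def laxF {M : ℕ → Type} (f : ∀ i, M i → M (i + 1)) (j : ℕ) (x : M j) :
    ∀ l, j ≤ l → M l
  | 0, h => (Nat.le_zero.mp h) ▸ x
  | l + 1, h =>
    if he : j = l + 1 then he ▸ x
    else f l (laxF f j x l (Nat.lt_succ_iff.mp (lt_of_le_of_ne h he)))

/-- The concrete lax sum of the sequence `M 0 → M 1 → ⋯ → M n`:
pairs `(j, x)` with `j ∈ Fin (n+1)` and `x ∈ M j`. -/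
abbrev LaxSum (M : ℕ → Type) (n : ℕ) : Type := Σ j : Fin (n + 1), M (j : ℕ)

/-- The lax sum order: `(j, x) ≤ (l, y)` iff `j ≤ l` and `F_{j,l}(x) ≤ y`. -/
def laxLE {M : ℕ → Type} [∀ i, PartialOrder (M i)] (f : ∀ i, M i → M (i + 1)) {n : ℕ}
    (a b : LaxSum M n) : Prop :=
  ∃ h : (a.1 : ℕ) ≤ (b.1 : ℕ), laxF f (a.1 : ℕ) a.2 (b.1 : ℕ) h ≤ b.2

/-- The canonical map `f'_n : L n → L (n+1)`, `(j, x) ↦ (j, x)`. -/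
def stepMap {M : ℕ → Type} {n : ℕ} (a : LaxSum M n) : LaxSum M (n + 1) :=
  ⟨⟨(a.1 : ℕ), Nat.lt_succ_of_lt a.1.isLt⟩, a.2⟩

/-- The canonical map `ι_j : M j → L n`, `x ↦ (j, x)`, for `j ≤ n`. -/
def laxIota {M : ℕ → Type} {n : ℕ} (j : ℕ) (h : j ≤ n) (x : M j) : LaxSum M n :=
  ⟨⟨j, Nat.lt_succ_of_le h⟩, x⟩

set_option linter.unusedSectionVars false

section Aux
variable {M : ℕ → Type} [∀ i, DistribLattice (M i)] {f : ∀ i, M i → M (i + 1)}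

lemma f_mono (hfj : ∀ i (x y : M i), f i (x ⊔ y) = f i x ⊔ f i y)
    (i : ℕ) {a b : M i} (h : a ≤ b) : f i a ≤ f i b := by
  have h2 := hfj i a b
  rw [sup_eq_right.mpr h] at h2
  exact le_sup_left.trans h2.ge

lemma f_inf (hfj : ∀ i (x y : M i), f i (x ⊔ y) = f i x ⊔ f i y)
    (hrefl : ∀ i (a b : M i), f i a ≤ f i b → a ≤ b)
    (hdc : ∀ i (y : M (i + 1)) (x : M i), y ≤ f i x → ∃ z : M i, f i z = y)
    (i : ℕ) (x y : M i) : f i (x ⊓ y) = f i x ⊓ f i y := by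
  obtain ⟨z, hz⟩ := hdc i (f i x ⊓ f i y) x inf_le_left
  have hzx : z ≤ x := hrefl i z x (by rw [hz]; exact inf_le_left)
  have hzy : z ≤ y := hrefl i z y (by rw [hz]; exact inf_le_right)
  refine le_antisymm (le_inf (f_mono hfj i inf_le_left) (f_mono hfj i inf_le_right)) ?_
  rw [← hz]
  exact f_mono hfj i (le_inf hzx hzy)

lemma laxF_self (j : ℕ) (x : M j) (h : j ≤ j) : laxF f j x j h = x := by
  cases j with
  | zero => rfl
  | succ l => simp [laxF]

lemma laxF_succ (j l : ℕ) (h' : j ≤ l) (x : M j) (h : j ≤ l + 1) :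
    laxF f j x (l + 1) h = f l (laxF f j x l h') := by
  rw [laxF, dif_neg (by omega : ¬ j = l + 1)]

lemma laxF_trans (j l : ℕ) (hjl : j ≤ l) (x : M j) :
    ∀ m (hlm : l ≤ m) (hjm : j ≤ m),
      laxF f j x m hjm = laxF f l (laxF f j x l hjl) m hlm := by
  intro m
  induction m with
  | zero =>
    intro hlm hjm
    obtain rfl : l = 0 := Nat.le_zero.mp hlm
    obtain rfl : j = 0 := Nat.le_zero.mp hjm
    rfl
  | succ m ih =>
    intro hlm hjm
    by_cases hl : l = m + 1
    · subst hl
      rw [laxF_self]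
    · have hlm' : l ≤ m := by omega
      have hjm' : j ≤ m := by omega
      rw [laxF_succ j m hjm' x hjm, laxF_succ l m hlm' _ hlm, ih hlm' hjm']

lemma laxF_mono (hfj : ∀ i (x y : M i), f i (x ⊔ y) = f i x ⊔ f i y)
    (j : ℕ) {x y : M j} (hxy : x ≤ y) :
    ∀ l (h : j ≤ l), laxF f j x l h ≤ laxF f j y l h := by
  intro l
  induction l with
  | zero =>
    intro h; obtain rfl : j = 0 := Nat.le_zero.mp h
    rw [laxF_self, laxF_self]; exact hxy
  | succ l ih =>
    intro h
    by_cases hj : j = l + 1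
    · subst hj; rw [laxF_self, laxF_self]; exact hxy
    · have h' : j ≤ l := by omega
      rw [laxF_succ j l h' x h, laxF_succ j l h' y h]
      exact f_mono hfj l (ih h')

lemma laxF_sup (hfj : ∀ i (x y : M i), f i (x ⊔ y) = f i x ⊔ f i y)
    (j : ℕ) (x y : M j) :
    ∀ l (h : j ≤ l), laxF f j (x ⊔ y) l h = laxF f j x l h ⊔ laxF f j y l h := by
  intro l
  induction l with
  | zero =>
    intro h; obtain rfl : j = 0 := Nat.le_zero.mp h
    rw [laxF_self, laxF_self, laxF_self]
  | succ l ih =>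
    intro h
    by_cases hj : j = l + 1
    · subst hj; rw [laxF_self, laxF_self, laxF_self]
    · have h' : j ≤ l := by omega
      rw [laxF_succ j l h' _ h, laxF_succ j l h' x h, laxF_succ j l h' y h, ih h', hfj]

lemma laxF_inf (hfj : ∀ i (x y : M i), f i (x ⊔ y) = f i x ⊔ f i y)
    (hrefl : ∀ i (a b : M i), f i a ≤ f i b → a ≤ b)
    (hdc : ∀ i (y : M (i + 1)) (x : M i), y ≤ f i x → ∃ z : M i, f i z = y)
    (j : ℕ) (x y : M j) :
    ∀ l (h : j ≤ l), laxF f j (x ⊓ y) l h = laxF f j x l h ⊓ laxF f j y l h := by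
  intro l
  induction l with
  | zero =>
    intro h; obtain rfl : j = 0 := Nat.le_zero.mp h
    rw [laxF_self, laxF_self, laxF_self]
  | succ l ih =>
    intro h
    by_cases hj : j = l + 1
    · subst hj; rw [laxF_self, laxF_self, laxF_self]
    · have h' : j ≤ l := by omega
      rw [laxF_succ j l h' _ h, laxF_succ j l h' x h, laxF_succ j l h' y h, ih h',
        f_inf hfj hrefl hdc]

lemma laxF_refl (hrefl : ∀ i (a b : M i), f i a ≤ f i b → a ≤ b)
    (j : ℕ) (x y : M j) :
    ∀ l (h : j ≤ l), laxF f j x l h ≤ laxF f j y l h → x ≤ y := by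
  intro l
  induction l with
  | zero =>
    intro h; obtain rfl : j = 0 := Nat.le_zero.mp h
    rw [laxF_self, laxF_self]; exact id
  | succ l ih =>
    intro h
    by_cases hj : j = l + 1
    · subst hj; rw [laxF_self, laxF_self]; exact id
    · have h' : j ≤ l := by omega
      rw [laxF_succ j l h' x h, laxF_succ j l h' y h]
      intro hle
      exact ih h' (hrefl l _ _ hle)

lemma laxF_inj (hrefl : ∀ i (a b : M i), f i a ≤ f i b → a ≤ b)
    (j : ℕ) (x y : M j) (l : ℕ) (h : j ≤ l)
    (heq : laxF f j x l h = laxF f j y l h) : x = y :=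
  le_antisymm (laxF_refl hrefl j x y l h heq.le) (laxF_refl hrefl j y x l h heq.ge)

lemma laxF_dc (hrefl : ∀ i (a b : M i), f i a ≤ f i b → a ≤ b)
    (hdc : ∀ i (y : M (i + 1)) (x : M i), y ≤ f i x → ∃ z : M i, f i z = y)
    (j : ℕ) (x : M j) :
    ∀ l (h : j ≤ l) (y : M l), y ≤ laxF f j x l h → ∃ z : M j, laxF f j z l h = y := by
  intro l
  induction l with
  | zero =>
    intro h y hy; obtain rfl : j = 0 := Nat.le_zero.mp h
    exact ⟨y, laxF_self 0 y h⟩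
  | succ l ih =>
    intro h y hy
    by_cases hj : j = l + 1
    · subst hj; exact ⟨y, laxF_self _ y h⟩
    · have h' : j ≤ l := by omega
      rw [laxF_succ j l h' x h] at hy
      obtain ⟨w, hw⟩ := hdc l y _ hy
      have hwle : w ≤ laxF f j x l h' := hrefl l _ _ (hw ▸ hy)
      obtain ⟨z, hz⟩ := ih h' w hwle
      exact ⟨z, by rw [laxF_succ j l h' z h, hz, hw]⟩

end Aux

section Main
variable {M : ℕ → Type} [∀ i, DistribLattice (M i)] {n : ℕ}

def lsup (f : ∀ i, M i → M (i + 1)) (a b : LaxSum M n) : LaxSum M n :=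
  if h : (a.1 : ℕ) ≤ (b.1 : ℕ) then ⟨b.1, laxF f a.1 a.2 b.1 h ⊔ b.2⟩
  else ⟨a.1, a.2 ⊔ laxF f b.1 b.2 a.1 (le_of_not_ge h)⟩

noncomputable def linf (f : ∀ i, M i → M (i + 1))
    (hrefl : ∀ i (a b : M i), f i a ≤ f i b → a ≤ b)
    (hdc : ∀ i (y : M (i + 1)) (x : M i), y ≤ f i x → ∃ z : M i, f i z = y)
    (a b : LaxSum M n) : LaxSum M n :=
  if h : (a.1 : ℕ) ≤ (b.1 : ℕ) then
    ⟨a.1, Classical.choose (laxF_dc hrefl hdc a.1 a.2 b.1 h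
      (laxF f a.1 a.2 b.1 h ⊓ b.2) inf_le_left)⟩
  else
    ⟨b.1, Classical.choose (laxF_dc hrefl hdc b.1 b.2 a.1 (le_of_not_ge h)
      (laxF f b.1 b.2 a.1 (le_of_not_ge h) ⊓ a.2) inf_le_left)⟩

def Emb (f : ∀ i, M i → M (i + 1)) (a : LaxSum M n) : Fin (n + 1) × M n :=
  (a.1, laxF f a.1 a.2 n (Nat.lt_succ_iff.mp a.1.isLt))

lemma Emb_le (f : ∀ i, M i → M (i + 1))
    (hfj : ∀ i (x y : M i), f i (x ⊔ y) = f i x ⊔ f i y)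
    (hrefl : ∀ i (a b : M i), f i a ≤ f i b → a ≤ b)
    (a b : LaxSum M n) : laxLE f a b ↔ Emb f a ≤ Emb f b := by
  have hbn : (b.1 : ℕ) ≤ n := Nat.lt_succ_iff.mp b.1.isLt
  constructor
  · rintro ⟨h, hle⟩
    refine Prod.le_def.mpr ⟨h, ?_⟩
    show laxF f a.1 a.2 n _ ≤ laxF f b.1 b.2 n _
    rw [laxF_trans a.1 b.1 h a.2 n hbn]
    exact laxF_mono hfj b.1 hle n hbn
  · intro hle
    obtain ⟨h1, h2⟩ := Prod.le_def.mp hle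
    have h : (a.1 : ℕ) ≤ (b.1 : ℕ) := h1
    refine ⟨h, ?_⟩
    apply laxF_refl hrefl b.1 _ b.2 n hbn
    rw [← laxF_trans a.1 b.1 h a.2 n hbn]
    exact h2

lemma Emb_inj (f : ∀ i, M i → M (i + 1))
    (hrefl : ∀ i (a b : M i), f i a ≤ f i b → a ≤ b) :
    Function.Injective (Emb f (M := M) (n := n)) := by
  rintro ⟨j, x⟩ ⟨l, y⟩ hab
  obtain ⟨h1, h2⟩ := Prod.ext_iff.mp hab
  obtain rfl : j = l := h1
  simp only [Sigma.mk.inj_iff, heq_eq_eq, true_and]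
  exact laxF_inj hrefl j x y n _ h2

lemma Emb_lsup (f : ∀ i, M i → M (i + 1))
    (hfj : ∀ i (x y : M i), f i (x ⊔ y) = f i x ⊔ f i y)
    (a b : LaxSum M n) : Emb f (lsup f a b) = Emb f a ⊔ Emb f b := by
  rw [lsup]
  by_cases h : (a.1 : ℕ) ≤ (b.1 : ℕ)
  · rw [dif_pos h]
    have hf : a.1 ⊔ b.1 = b.1 := sup_eq_right.mpr (by exact h)
    refine Prod.ext hf.symm ?_
    show laxF f b.1 (laxF f a.1 a.2 b.1 h ⊔ b.2) n _ = _
    rw [laxF_sup hfj, ← laxF_trans a.1 b.1 h a.2 n]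
    rfl
  · rw [dif_neg h]
    have h' : (b.1 : ℕ) ≤ (a.1 : ℕ) := le_of_not_ge h
    have hf : a.1 ⊔ b.1 = a.1 := sup_eq_left.mpr (by exact h')
    refine Prod.ext hf.symm ?_
    have han : (a.1 : ℕ) ≤ n := Nat.lt_succ_iff.mp a.1.isLt
    show laxF f a.1 (a.2 ⊔ laxF f b.1 b.2 a.1 h') n _ = _
    rw [laxF_sup hfj, ← laxF_trans b.1 a.1 h' b.2 n han (h'.trans han)]
    rfl

lemma Emb_linf (f : ∀ i, M i → M (i + 1))
    (hfj : ∀ i (x y : M i), f i (x ⊔ y) = f i x ⊔ f i y)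
    (hrefl : ∀ i (a b : M i), f i a ≤ f i b → a ≤ b)
    (hdc : ∀ i (y : M (i + 1)) (x : M i), y ≤ f i x → ∃ z : M i, f i z = y)
    (a b : LaxSum M n) : Emb f (linf f hrefl hdc a b) = Emb f a ⊓ Emb f b := by
  rw [linf]
  by_cases h : (a.1 : ℕ) ≤ (b.1 : ℕ)
  · rw [dif_pos h]
    have hf : a.1 ⊓ b.1 = a.1 := inf_eq_left.mpr (by exact h)
    refine Prod.ext hf.symm ?_
    have hz := Classical.choose_spec (laxF_dc hrefl hdc a.1 a.2 b.1 h
      (laxF f a.1 a.2 b.1 h ⊓ b.2) inf_le_left)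
    have hbn : (b.1 : ℕ) ≤ n := Nat.lt_succ_iff.mp b.1.isLt
    show laxF f a.1 _ n _ = _
    rw [laxF_trans a.1 b.1 h _ n hbn, hz, laxF_inf hfj hrefl hdc,
      ← laxF_trans a.1 b.1 h a.2 n hbn]
    rfl
  · rw [dif_neg h]
    have h' : (b.1 : ℕ) ≤ (a.1 : ℕ) := le_of_not_ge h
    have hf : a.1 ⊓ b.1 = b.1 := inf_eq_right.mpr (by exact h')
    refine Prod.ext hf.symm ?_
    have hz := Classical.choose_spec (laxF_dc hrefl hdc b.1 b.2 a.1 h'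
      (laxF f b.1 b.2 a.1 h' ⊓ a.2) inf_le_left)
    have han : (a.1 : ℕ) ≤ n := Nat.lt_succ_iff.mp a.1.isLt
    show laxF f b.1 _ n _ = _
    rw [laxF_trans b.1 a.1 h' _ n han, hz, laxF_inf hfj hrefl hdc,
      ← laxF_trans b.1 a.1 h' b.2 n han (h'.trans han), Prod.snd_inf]
    exact inf_comm _ _

end Main


/-- For a lattice series of distributive lattices (maps preserving binary joins,
order-reflecting, with down-closed image), the concrete lax sum `L n` carries a
distributive lattice structure whose order is the lax sum order, with joins
`(j, x) ⊔ (l, y) = (l, F_{j,l}(x) ⊔ y)` and meets `(j, x) ⊓ (l, y) = (j, z')` where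
`F_{j,l}(z') = F_{j,l}(x) ⊓ y` (for `j ≤ l`). -/
theorem stmt_16 (M : ℕ → Type) [∀ i, DistribLattice (M i)] (f : ∀ i, M i → M (i + 1))
    (hfj : ∀ i (x y : M i), f i (x ⊔ y) = f i x ⊔ f i y)
    (hrefl : ∀ i (a b : M i), f i a ≤ f i b → a ≤ b)
    (hdc : ∀ i (y : M (i + 1)) (x : M i), y ≤ f i x → ∃ z : M i, f i z = y)
    (n : ℕ) :
    ∃ inst : DistribLattice (LaxSum M n),
      (∀ a b : LaxSum M n, inst.le a b ↔ laxLE f a b) ∧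
      (∀ (j l : Fin (n + 1)) (h : (j : ℕ) ≤ (l : ℕ)) (x : M (j : ℕ)) (y : M (l : ℕ)),
          inst.sup ⟨j, x⟩ ⟨l, y⟩ = (⟨l, laxF f (j : ℕ) x (l : ℕ) h ⊔ y⟩ : LaxSum M n)) ∧
      (∀ (j l : Fin (n + 1)) (h : (j : ℕ) ≤ (l : ℕ)) (x : M (j : ℕ)) (y : M (l : ℕ))
          (z' : M (j : ℕ)), laxF f (j : ℕ) z' (l : ℕ) h = laxF f (j : ℕ) x (l : ℕ) h ⊓ y →
          inst.inf ⟨j, x⟩ ⟨l, y⟩ = (⟨j, z'⟩ : LaxSum M n)) := by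
  have hE := Emb_le f hfj hrefl (n := n)
  have hS := Emb_lsup f hfj (n := n)
  have hI := Emb_linf f hfj hrefl hdc (n := n)
  have hInj := Emb_inj (f := f) hrefl (n := n)
  letI : Max (LaxSum M n) := ⟨lsup f⟩
  letI : Min (LaxSum M n) := ⟨linf f hrefl hdc⟩
  letI : LE (LaxSum M n) := ⟨fun a b => Emb f a ≤ Emb f b⟩
  letI : LT (LaxSum M n) := ⟨fun a b => Emb f a < Emb f b⟩
  refine ⟨Function.Injective.distribLattice (Emb f) hInj Iff.rfl Iff.rfl hS hI, ?_, ?_, ?_⟩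
  · intro a b
    exact (hE a b).symm
  · intro j l h x y
    show lsup f ⟨j, x⟩ ⟨l, y⟩ = _
    rw [lsup, dif_pos h]
  · intro j l h x y z' hz'
    show linf f hrefl hdc ⟨j, x⟩ ⟨l, y⟩ = _
    rw [linf, dif_pos h]
    have hz := Classical.choose_spec (laxF_dc hrefl hdc (j : ℕ) x (l : ℕ) h
      (laxF f (j : ℕ) x (l : ℕ) h ⊓ y) inf_le_left)
    have heq : Classical.choose (laxF_dc hrefl hdc (j : ℕ) x (l : ℕ) h
        (laxF f (j : ℕ) x (l : ℕ) h ⊓ y) inf_le_left) = z' :=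
      laxF_inj hrefl (j : ℕ) _ z' (l : ℕ) h (hz.trans hz'.symm)
    rw [heq]
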